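/- Let f : ℝ^d → [0,∞) be an upper semi-continuous log-concave function with finite integral. Then the function z ↦ ∫_{ℝ^d} L_∞(f(·+z)) is convex on the interior of the support of f, and its reciprocal is log-concave there. -/

import Mathlib

open MeasureTheory Set

variable {d : ℕ}

/-- The polar (log-conjugate) transform of a nonnegative function. -/
noncomputable def polarT (f : EuclideanSpace ℝ (Fin d) → ℝ)
    (y : EuclideanSpace ℝ (Fin d)) : ℝ :=
  ⨅ x : {x : EuclideanSpace ℝ (Fin d) // 0 < f x},
    Real.exp (-(inner ℝ (x : EuclideanSpace ℝ (Fin d)) y : ℝ)) / f x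

private lemma iInf_comp_equiv {α : Type*} [InfSet α] {ι ι' : Sort*} {g : ι' → α} (e : ι ≃ ι') :
    ⨅ x, g (e x) = ⨅ y, g y := by
  unfold iInf
  congr 1
  exact e.surjective.range_comp g

private lemma my_iInf_congr {α : Type*} [InfSet α] {ι : Sort*} {f g : ι → α}
    (h : ∀ i, f i = g i) : ⨅ i, f i = ⨅ i, g i := by
  congr 1; exact funext h

lemma integrable_exp_neg_mul_abs {b : ℝ} (hb : 0 < b) :
    Integrable fun x : ℝ => Real.exp (-(b * |x|)) := by
  have hIoi : IntegrableOn (fun x : ℝ => Real.exp (-(b * |x|))) (Ioi 0) := by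
    refine (exp_neg_integrableOn_Ioi 0 hb).congr_fun (fun x hx => ?_) measurableSet_Ioi
    rw [abs_of_pos hx]; ring_nf
  rw [← integrableOn_univ, ← Iio_union_Ici (a := (0:ℝ)), integrableOn_union,
    integrableOn_Ici_iff_integrableOn_Ioi]
  refine ⟨?_, hIoi⟩
  rw [← (Measure.measurePreserving_neg (volume : Measure ℝ)).integrableOn_comp_preimage
      (Homeomorph.neg ℝ).measurableEmbedding]
  simp only [Function.comp_def, abs_neg, neg_preimage, neg_Iio, neg_zero]
  exact hIoi

lemma abs_coord_le_norm {d : ℕ} (y : EuclideanSpace ℝ (Fin d)) (i : Fin d) : |y i| ≤ ‖y‖ := by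
  calc |y i| = Real.sqrt (‖y i‖ ^ 2) := by
        rw [Real.sqrt_sq (norm_nonneg _), Real.norm_eq_abs]
    _ ≤ Real.sqrt (∑ j, ‖y j‖ ^ 2) :=
        Real.sqrt_le_sqrt (Finset.single_le_sum (f := fun j => ‖y j‖ ^ 2) (fun j _ => sq_nonneg _) (Finset.mem_univ i))
    _ = ‖y‖ := (EuclideanSpace.norm_eq y).symm

lemma integrable_exp_neg_mul_norm {d : ℕ} {a : ℝ} (ha : 0 < a) :
    Integrable fun y : EuclideanSpace ℝ (Fin d) => Real.exp (-(a * ‖y‖)) := by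
  have hone : ∀ _i : Fin d, Integrable fun x : ℝ => Real.exp (-((a / d) * |x|)) := by
    intro i
    have hd : (0:ℝ) < d := by exact_mod_cast i.pos
    exact integrable_exp_neg_mul_abs (div_pos ha hd)
  have hprod : Integrable fun x : Fin d → ℝ => ∏ i, Real.exp (-((a / d) * |x i|)) :=
    Integrable.fintype_prod (f := fun _ x => Real.exp (-((a / d) * |x|))) hone
  have hE : Integrable fun y : EuclideanSpace ℝ (Fin d) => ∏ i, Real.exp (-((a / d) * |y i|)) := by
    exact ((EuclideanSpace.volume_preserving_symm_measurableEquiv_toLp (Fin d)).integrable_comp_emb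
      (MeasurableEquiv.measurableEmbedding _)).2 hprod
  refine hE.mono' ?_ ?_
  · exact (Real.continuous_exp.comp ((continuous_const.mul continuous_norm).neg)).aestronglyMeasurable
  · refine Filter.Eventually.of_forall fun y => ?_
    rw [Real.norm_eq_abs, abs_of_pos (Real.exp_pos _), ← Real.exp_sum]
    apply Real.exp_le_exp.2
    rcases Nat.eq_zero_or_pos d with hd | hd
    · subst hd
      simp only [Finset.univ_eq_empty, Finset.sum_empty]
      have : 0 ≤ a * ‖y‖ := mul_nonneg ha.le (norm_nonneg _)
      linarith
    · have hd' : (0:ℝ) < d := by exact_mod_cast hd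
      have hsum : ∑ i, |y i| ≤ (d:ℝ) * ‖y‖ := by
        calc ∑ i, |y i| ≤ ∑ _i : Fin d, ‖y‖ :=
              Finset.sum_le_sum fun i _ => abs_coord_le_norm y i
          _ = (d:ℝ) * ‖y‖ := by simp [Finset.sum_const, Finset.card_univ, nsmul_eq_mul]
      have heq : ∑ i, -((a / d) * |y i|) = -((a / d) * ∑ i, |y i|) := by
        rw [Finset.mul_sum, ← Finset.sum_neg_distrib]
      rw [heq, neg_le_neg_iff]
      rw [div_mul_eq_mul_div, div_le_iff₀ hd']
      nlinarith [Finset.sum_nonneg (fun i (_ : i ∈ Finset.univ) => abs_nonneg (y i))]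

lemma polarT_nonneg {d : ℕ} (f : EuclideanSpace ℝ (Fin d) → ℝ) (hf : ∀ x, 0 ≤ f x)
    (y : EuclideanSpace ℝ (Fin d)) : 0 ≤ polarT f y :=
  Real.iInf_nonneg fun x => div_nonneg (Real.exp_pos _).le (hf x)

lemma polarT_le {d : ℕ} {f : EuclideanSpace ℝ (Fin d) → ℝ} (hf : ∀ x, 0 ≤ f x)
    {x : EuclideanSpace ℝ (Fin d)} (hx : 0 < f x) (y : EuclideanSpace ℝ (Fin d)) :
    polarT f y ≤ Real.exp (-(inner ℝ x y : ℝ)) / f x := by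
  apply ciInf_le _ (⟨x, hx⟩ : {x : EuclideanSpace ℝ (Fin d) // 0 < f x})
  refine ⟨0, ?_⟩
  rintro r ⟨u, rfl⟩
  exact div_nonneg (Real.exp_pos _).le (hf u)

lemma polarT_shift {d : ℕ} (f : EuclideanSpace ℝ (Fin d) → ℝ)
    (z y : EuclideanSpace ℝ (Fin d)) :
    polarT (fun x => f (x + z)) y = Real.exp ((inner ℝ z y : ℝ)) * polarT f y := by
  unfold polarT
  rw [Real.mul_iInf_of_nonneg (Real.exp_pos _).le]
  rw [← iInf_comp_equiv
    (⟨fun u => ⟨u.1 - z, by simpa using u.2⟩, fun x => ⟨x.1 + z, x.2⟩,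
      fun u => by simp, fun x => by simp⟩ :
      {u : EuclideanSpace ℝ (Fin d) // 0 < f u} ≃
      {x : EuclideanSpace ℝ (Fin d) // 0 < f (x + z)})]
  apply my_iInf_congr
  rintro ⟨u, hu⟩
  show Real.exp (-(inner ℝ (u - z) y : ℝ)) / f (u - z + z) =
    Real.exp ((inner ℝ z y : ℝ)) * (Real.exp (-(inner ℝ u y : ℝ)) / f u)
  rw [sub_add_cancel]
  rw [show -(inner ℝ (u - z) y : ℝ) = (inner ℝ z y : ℝ) + -(inner ℝ u y : ℝ) by
    rw [inner_sub_left]; ring]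
  rw [Real.exp_add, mul_div_assoc]

lemma polarT_measurable {d : ℕ} (f : EuclideanSpace ℝ (Fin d) → ℝ) (hf : ∀ x, 0 ≤ f x) :
    Measurable (polarT f) := by
  rcases isEmpty_or_nonempty {x : EuclideanSpace ℝ (Fin d) // 0 < f x} with h | h
  · have : polarT f = fun _ => 0 := funext fun y => Real.iInf_of_isEmpty _
    rw [this]; exact measurable_const
  · have husc : UpperSemicontinuous (polarT f) := by
      rw [upperSemicontinuous_iff_isOpen_preimage]
      intro c
      have hset : polarT f ⁻¹' Iio c = ⋃ x : {x : EuclideanSpace ℝ (Fin d) // 0 < f x},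
          {y | Real.exp (-(inner ℝ (x : EuclideanSpace ℝ (Fin d)) y : ℝ)) / f x < c} := by
        ext y
        simp only [mem_preimage, mem_Iio, mem_iUnion, mem_setOf_eq, polarT]
        rw [ciInf_lt_iff]
        refine ⟨0, ?_⟩
        rintro r ⟨u, rfl⟩
        exact div_nonneg (Real.exp_pos _).le (hf u)
      rw [hset]
      refine isOpen_iUnion fun x => ?_
      exact isOpen_lt ((Real.continuous_exp.comp
        ((continuous_const.inner continuous_id).neg)).div_const _) continuous_const
    exact husc.measurable

lemma polarT_decay {d : ℕ} (f : EuclideanSpace ℝ (Fin d) → ℝ) (hf : ∀ x, 0 ≤ f x)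
    {z : EuclideanSpace ℝ (Fin d)} (hz : z ∈ interior (Function.support f)) :
    ∃ a c : ℝ, 0 < a ∧ 0 < c ∧ ∀ y,
      Real.exp ((inner ℝ z y : ℝ)) * polarT f y ≤ c * Real.exp (-(a * ‖y‖)) := by
  obtain ⟨ε, hε, hball⟩ := Metric.isOpen_iff.1 isOpen_interior z hz
  have hsupp : Metric.ball z ε ⊆ Function.support f := hball.trans interior_subset
  have hposball : ∀ x ∈ Metric.ball z ε, 0 < f x := fun x hx => (hf x).lt_of_ne (Ne.symm (hsupp hx))
  rcases Nat.eq_zero_or_pos d with hd0 | hd0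
  · subst hd0
    have hzpos : 0 < f z := hposball z (Metric.mem_ball_self hε)
    refine ⟨1, (f z)⁻¹, one_pos, inv_pos.2 hzpos, fun y => ?_⟩
    have hy : y = 0 := by ext i; exact Fin.elim0 i
    subst hy
    have h1 : polarT f 0 ≤ Real.exp (-(inner ℝ z (0:EuclideanSpace ℝ (Fin 0)) : ℝ)) / f z :=
      polarT_le hf hzpos 0
    simp only [inner_zero_right, neg_zero, Real.exp_zero, norm_zero, mul_zero, one_mul] at h1 ⊢
    rw [one_div] at h1
    linarith
  · set r : ℝ := ε / 2 with hr
    have hrpos : 0 < r := by positivity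
    have hP : ∀ (j : Fin d) (s : ℝ), |s| = r →
        0 < f (z + s • EuclideanSpace.single j (1:ℝ)) := by
      intro j s hs
      apply hposball
      rw [Metric.mem_ball, dist_eq_norm, add_sub_cancel_left, norm_smul,
        EuclideanSpace.norm_single]
      rw [Real.norm_eq_abs, hs]
      simp only [norm_one, mul_one]
      linarith
    have hne : (Finset.univ : Finset (Fin d × Bool)).Nonempty := by
      haveI : NeZero d := ⟨hd0.ne'⟩
      exact Finset.univ_nonempty
    set c : ℝ := (Finset.univ : Finset (Fin d × Bool)).inf'
      hne (fun p => f (z + (if p.2 then r else -r) • EuclideanSpace.single p.1 (1:ℝ))) with hc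
    have hcpos : 0 < c := by
      rw [hc, Finset.lt_inf'_iff]
      intro p _
      apply hP
      rcases p.2 with _|_ <;> simp [abs_of_pos hrpos, abs_of_neg (neg_neg_iff_pos.2 hrpos), hrpos.le]
    have hdpos : (0:ℝ) < Real.sqrt d := Real.sqrt_pos.2 (by exact_mod_cast hd0)
    refine ⟨r / Real.sqrt d, c⁻¹, div_pos hrpos hdpos, inv_pos.2 hcpos, fun y => ?_⟩
    -- pick the coordinate with maximal absolute value
    obtain ⟨j, -, hj⟩ := Finset.exists_max_image (Finset.univ : Finset (Fin d))
      (fun i => |y i|) (by haveI : NeZero d := ⟨hd0.ne'⟩; exact Finset.univ_nonempty)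
    have hnorm : ‖y‖ ≤ Real.sqrt d * |y j| := by
      rw [EuclideanSpace.norm_eq]
      have hsq : ∑ i, ‖y i‖ ^ 2 ≤ (d:ℝ) * |y j| ^ 2 := by
        calc ∑ i, ‖y i‖ ^ 2 ≤ ∑ _i : Fin d, |y j| ^ 2 := by
              refine Finset.sum_le_sum fun i _ => ?_
              rw [Real.norm_eq_abs]
              exact pow_le_pow_left₀ (abs_nonneg _) (hj i (Finset.mem_univ i)) 2
          _ = (d:ℝ) * |y j| ^ 2 := by simp [Finset.sum_const, Finset.card_univ, nsmul_eq_mul]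
      calc Real.sqrt (∑ i, ‖y i‖ ^ 2) ≤ Real.sqrt ((d:ℝ) * |y j| ^ 2) := Real.sqrt_le_sqrt hsq
        _ = Real.sqrt d * |y j| := by
            rw [Real.sqrt_mul (Nat.cast_nonneg d), Real.sqrt_sq_eq_abs, abs_abs]
    set s : ℝ := if 0 ≤ y j then r else -r with hs
    have hsabs : |s| = r := by
      rw [hs]; split_ifs
      · exact abs_of_pos hrpos
      · rw [abs_neg]; exact abs_of_pos hrpos
    set x : EuclideanSpace ℝ (Fin d) := z + s • EuclideanSpace.single j (1:ℝ) with hx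
    have hfx : 0 < f x := hP j s hsabs
    have hip : (inner ℝ x y : ℝ) = (inner ℝ z y : ℝ) + r * |y j| := by
      rw [hx, inner_add_left, real_inner_smul_left, EuclideanSpace.inner_single_left]
      congr 1
      rw [hs]
      split_ifs with h
      · simp [abs_of_nonneg h]
      · push_neg at h
        simp [abs_of_neg h]
    have h1 : polarT f y ≤ Real.exp (-(inner ℝ x y : ℝ)) / f x := polarT_le hf hfx y
    have hcle : c ≤ f x := by
      have := Finset.inf'_le
        (f := fun p : Fin d × Bool =>
          f (z + (if p.2 then r else -r) • EuclideanSpace.single p.1 (1:ℝ)))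
        (Finset.mem_univ (j, decide (0 ≤ y j)))
      rw [← hc] at this
      refine this.trans_eq ?_
      congr 2
      rw [hs]
      by_cases h : 0 ≤ y j <;> simp [h]
    calc Real.exp ((inner ℝ z y : ℝ)) * polarT f y
        ≤ Real.exp ((inner ℝ z y : ℝ)) * (Real.exp (-(inner ℝ x y : ℝ)) / f x) := by
          exact mul_le_mul_of_nonneg_left h1 (Real.exp_pos _).le
      _ = Real.exp (-(r * |y j|)) / f x := by
          rw [hip, ← mul_div_assoc, ← Real.exp_add]
          congr 2
          ring
      _ ≤ Real.exp (-(r / Real.sqrt d * ‖y‖)) / c := by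
          apply div_le_div₀ (Real.exp_pos _).le _ hcpos hcle
          apply Real.exp_le_exp.2
          rw [neg_le_neg_iff]
          calc r / Real.sqrt d * ‖y‖ ≤ r / Real.sqrt d * (Real.sqrt d * |y j|) := by
                apply mul_le_mul_of_nonneg_left hnorm (by positivity)
            _ = r * |y j| := by field_simp
      _ = c⁻¹ * Real.exp (-(r / Real.sqrt d * ‖y‖)) := by rw [div_eq_inv_mul]

lemma integrable_G {d : ℕ} (f : EuclideanSpace ℝ (Fin d) → ℝ) (hf : ∀ x, 0 ≤ f x)
    {z : EuclideanSpace ℝ (Fin d)} (hz : z ∈ interior (Function.support f)) :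
    Integrable fun y => Real.exp ((inner ℝ z y : ℝ)) * polarT f y := by
  obtain ⟨a, c, ha, hc, hbound⟩ := polarT_decay f hf hz
  refine (((integrable_exp_neg_mul_norm ha).const_mul c)).mono' ?_ ?_
  · exact ((Real.continuous_exp.comp
      (continuous_const.inner continuous_id)).measurable.mul
      (polarT_measurable f hf)).aestronglyMeasurable
  · refine Filter.Eventually.of_forall fun y => ?_
    rw [Real.norm_eq_abs, abs_of_nonneg (mul_nonneg (Real.exp_pos _).le (polarT_nonneg f hf y))]
    exact hbound y

lemma integral_holder {α : Type*} [MeasurableSpace α] {μ : Measure α} {g1 g2 g3 : α → ℝ}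
    (h1 : Integrable g1 μ) (h2 : Integrable g2 μ) (h3 : Integrable g3 μ)
    (h1n : ∀ y, 0 ≤ g1 y) (h2n : ∀ y, 0 ≤ g2 y) (h3n : ∀ y, 0 ≤ g3 y)
    {t : ℝ} (ht0 : 0 < t) (ht1 : t < 1)
    (hpt : ∀ y, g3 y = g1 y ^ (1 - t) * g2 y ^ t) :
    ∫ y, g3 y ∂μ ≤ (∫ y, g1 y ∂μ) ^ (1 - t) * (∫ y, g2 y ∂μ) ^ t := by
  have ht0' : (0:ℝ) < 1 - t := by linarith
  have e1 : ∫ y, g1 y ∂μ = (∫⁻ y, ENNReal.ofReal (g1 y) ∂μ).toReal :=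
    integral_eq_lintegral_of_nonneg_ae (Filter.Eventually.of_forall h1n) h1.aestronglyMeasurable
  have e2 : ∫ y, g2 y ∂μ = (∫⁻ y, ENNReal.ofReal (g2 y) ∂μ).toReal :=
    integral_eq_lintegral_of_nonneg_ae (Filter.Eventually.of_forall h2n) h2.aestronglyMeasurable
  have e3 : ∫ y, g3 y ∂μ = (∫⁻ y, ENNReal.ofReal (g3 y) ∂μ).toReal :=
    integral_eq_lintegral_of_nonneg_ae (Filter.Eventually.of_forall h3n) h3.aestronglyMeasurable
  have hfin1 : (∫⁻ y, ENNReal.ofReal (g1 y) ∂μ) ≠ ⊤ := h1.lintegral_lt_top.ne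
  have hfin2 : (∫⁻ y, ENNReal.ofReal (g2 y) ∂μ) ≠ ⊤ := h2.lintegral_lt_top.ne
  have hconj : Real.HolderConjugate (1 - t)⁻¹ t⁻¹ :=
    Real.HolderConjugate.inv_inv ht0' ht0 (by ring)
  have hm1 : AEMeasurable (fun y => ENNReal.ofReal (g1 y) ^ (1 - t)) μ :=
    (h1.aemeasurable.ennreal_ofReal).pow_const _
  have hm2 : AEMeasurable (fun y => ENNReal.ofReal (g2 y) ^ t) μ :=
    (h2.aemeasurable.ennreal_ofReal).pow_const _
  have key : (∫⁻ y, ENNReal.ofReal (g3 y) ∂μ) ≤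
      (∫⁻ y, ENNReal.ofReal (g1 y) ∂μ) ^ (1 - t) * (∫⁻ y, ENNReal.ofReal (g2 y) ∂μ) ^ t := by
    have hcongr : (∫⁻ y, ENNReal.ofReal (g3 y) ∂μ) =
        ∫⁻ y, ((fun y => ENNReal.ofReal (g1 y) ^ (1 - t)) *
          (fun y => ENNReal.ofReal (g2 y) ^ t)) y ∂μ := by
      apply lintegral_congr fun y => ?_
      simp only [Pi.mul_apply]
      rw [hpt y, ENNReal.ofReal_mul (Real.rpow_nonneg (h1n y) _),
        ENNReal.ofReal_rpow_of_nonneg (h1n y) ht0'.le,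
        ENNReal.ofReal_rpow_of_nonneg (h2n y) ht0.le]
    rw [hcongr]
    have := ENNReal.lintegral_mul_le_Lp_mul_Lq μ hconj hm1 hm2
    refine this.trans_eq ?_
    have hrw1 : ∀ y : α, (ENNReal.ofReal (g1 y) ^ (1 - t)) ^ (1 - t)⁻¹ =
        ENNReal.ofReal (g1 y) := by
      intro y
      rw [← ENNReal.rpow_mul, mul_inv_cancel₀ ht0'.ne', ENNReal.rpow_one]
    have hrw2 : ∀ y : α, (ENNReal.ofReal (g2 y) ^ t) ^ t⁻¹ = ENNReal.ofReal (g2 y) := by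
      intro y
      rw [← ENNReal.rpow_mul, mul_inv_cancel₀ ht0.ne', ENNReal.rpow_one]
    simp only [hrw1, hrw2, one_div, inv_inv]
  rw [e1, e2, e3]
  have hrhs : ((∫⁻ y, ENNReal.ofReal (g1 y) ∂μ) ^ (1 - t) *
      (∫⁻ y, ENNReal.ofReal (g2 y) ∂μ) ^ t) ≠ ⊤ :=
    (ENNReal.mul_lt_top (ENNReal.rpow_lt_top_of_nonneg ht0'.le hfin1)
      (ENNReal.rpow_lt_top_of_nonneg ht0.le hfin2)).ne
  calc (∫⁻ y, ENNReal.ofReal (g3 y) ∂μ).toReal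
      ≤ ((∫⁻ y, ENNReal.ofReal (g1 y) ∂μ) ^ (1 - t) *
        (∫⁻ y, ENNReal.ofReal (g2 y) ∂μ) ^ t).toReal := ENNReal.toReal_mono hrhs key
    _ = (∫⁻ y, ENNReal.ofReal (g1 y) ∂μ).toReal ^ (1 - t) *
        (∫⁻ y, ENNReal.ofReal (g2 y) ∂μ).toReal ^ t := by
        rw [ENNReal.toReal_mul, ENNReal.toReal_rpow, ENNReal.toReal_rpow]

lemma main_aux {d : ℕ} (f : EuclideanSpace ℝ (Fin d) → ℝ) (hf : ∀ x, 0 ≤ f x)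
    (hlc : ∀ x y : EuclideanSpace ℝ (Fin d), ∀ t ∈ Set.Icc (0 : ℝ) 1,
      f x ^ (1 - t) * f y ^ t ≤ f ((1 - t) • x + t • y)) :
    ConvexOn ℝ (interior (Function.support f))
      (fun z => ∫ y, Real.exp ((inner ℝ z y : ℝ)) * polarT f y) ∧
    ConcaveOn ℝ (interior (Function.support f))
      (fun z => Real.log (∫ y, Real.exp ((inner ℝ z y : ℝ)) * polarT f y)⁻¹) := by
  have hsupp_conv : Convex ℝ (Function.support f) := by
    intro x hx y' hy' a b ha hb hab
    have hx' : 0 < f x := (hf x).lt_of_ne (Ne.symm hx)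
    have hy'' : 0 < f y' := (hf y').lt_of_ne (Ne.symm hy')
    have hb1 : b ∈ Icc (0:ℝ) 1 := ⟨hb, by linarith⟩
    have hkey := hlc x y' b hb1
    have h1b : 1 - b = a := by linarith
    rw [h1b] at hkey
    have hpos : 0 < f (a • x + b • y') :=
      lt_of_lt_of_le (mul_pos (Real.rpow_pos_of_pos hx' _) (Real.rpow_pos_of_pos hy'' _)) hkey
    exact Function.mem_support.2 hpos.ne'
  have hSconv : Convex ℝ (interior (Function.support f)) := hsupp_conv.interior
  have hgnn := polarT_nonneg f hf
  set F : EuclideanSpace ℝ (Fin d) → ℝ :=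
    fun z => ∫ y, Real.exp ((inner ℝ z y : ℝ)) * polarT f y with hFdef
  have hGint : ∀ z ∈ interior (Function.support f),
      Integrable (fun y => Real.exp ((inner ℝ z y : ℝ)) * polarT f y) :=
    fun z hz => integrable_G f hf hz
  have hGnn : ∀ z, ∀ y : EuclideanSpace ℝ (Fin d),
      0 ≤ Real.exp ((inner ℝ z y : ℝ)) * polarT f y :=
    fun z y => mul_nonneg (Real.exp_pos _).le (hgnn y)
  have hFnn : ∀ z, 0 ≤ F z := fun z => integral_nonneg (hGnn z)
  have hzero : ∀ z ∈ interior (Function.support f), F z = 0 → ∀ w, F w = 0 := by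
    intro z hz h0 w
    have hae := (integral_eq_zero_iff_of_nonneg (hGnn z) (hGint z hz)).1 h0
    have hg0 : (polarT f) =ᵐ[volume] 0 := by
      filter_upwards [hae] with y hy
      have hy' : Real.exp ((inner ℝ z y : ℝ)) * polarT f y = 0 := hy
      rcases mul_eq_zero.1 hy' with h | h
      · exact absurd h (Real.exp_ne_zero _)
      · simpa using h
    apply integral_eq_zero_of_ae
    filter_upwards [hg0] with y hy
    simp only [Pi.zero_apply] at hy
    simp [hy]
  have hmain : ∀ z1 ∈ interior (Function.support f), ∀ z2 ∈ interior (Function.support f),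
      ∀ a b : ℝ, 0 ≤ a → 0 ≤ b → a + b = 1 →
      F (a • z1 + b • z2) ≤ F z1 ^ a * F z2 ^ b := by
    intro z1 h1 z2 h2 a b ha hb hab
    rcases eq_or_lt_of_le ha with ha0 | hapos
    · have hb1 : b = 1 := by linarith
      rw [← ha0, hb1]
      simp [Real.rpow_zero, Real.rpow_one]
    rcases eq_or_lt_of_le hb with hb0 | hbpos
    · have ha1 : a = 1 := by linarith
      rw [← hb0, ha1]
      simp [Real.rpow_zero, Real.rpow_one]
    have hb1 : b < 1 := by linarith
    have hmid : a • z1 + b • z2 ∈ interior (Function.support f) := hSconv h1 h2 ha hb hab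
    have h1b : (1:ℝ) - b = a := by linarith
    have key := integral_holder (hGint z1 h1) (hGint z2 h2) (hGint _ hmid)
      (hGnn z1) (hGnn z2) (hGnn _) hbpos hb1 ?_
    · rw [h1b] at key
      exact key
    · intro y
      have hinner : (inner ℝ (a • z1 + b • z2) y : ℝ) =
          (inner ℝ z1 y : ℝ) * a + (inner ℝ z2 y : ℝ) * b := by
        rw [inner_add_left, real_inner_smul_left, real_inner_smul_left]; ring
      have hgy : polarT f y ^ a * polarT f y ^ b = polarT f y := by
        rcases eq_or_lt_of_le (hgnn y) with h0 | hpos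
        · rw [← h0, Real.zero_rpow hapos.ne', Real.zero_rpow hbpos.ne', mul_zero]
        · rw [← Real.rpow_add hpos, hab, Real.rpow_one]
      rw [h1b, Real.mul_rpow (Real.exp_pos _).le (hgnn y),
        Real.mul_rpow (Real.exp_pos _).le (hgnn y),
        ← Real.exp_mul, ← Real.exp_mul, hinner, Real.exp_add]
      conv_lhs => rw [← hgy]
      ring
  constructor
  · refine ⟨hSconv, fun z1 h1 z2 h2 a b ha hb hab => ?_⟩
    calc F (a • z1 + b • z2) ≤ F z1 ^ a * F z2 ^ b := hmain z1 h1 z2 h2 a b ha hb hab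
      _ ≤ a * F z1 + b * F z2 :=
        Real.geom_mean_le_arith_mean2_weighted ha hb (hFnn z1) (hFnn z2) hab
      _ = a • F z1 + b • F z2 := by simp [smul_eq_mul]
  · refine ⟨hSconv, fun z1 h1 z2 h2 a b ha hb hab => ?_⟩
    simp only [Real.log_inv, smul_eq_mul]
    show a * -Real.log (F z1) + b * -Real.log (F z2) ≤ -Real.log (F (a • z1 + b • z2))
    by_cases h0 : F z1 = 0 ∨ F z2 = 0 ∨ F (a • z1 + b • z2) = 0
    · have hall : ∀ w, F w = 0 := by
        rcases h0 with h | h | h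
        exacts [hzero z1 h1 h, hzero z2 h2 h, hzero _ (hSconv h1 h2 ha hb hab) h]
      rw [hall, hall, hall]
      simp
    · push_neg at h0
      obtain ⟨hn1, hn2, hnm⟩ := h0
      have hp1 : 0 < F z1 := (hFnn z1).lt_of_ne (Ne.symm hn1)
      have hp2 : 0 < F z2 := (hFnn z2).lt_of_ne (Ne.symm hn2)
      have hpm : 0 < F (a • z1 + b • z2) := (hFnn _).lt_of_ne (Ne.symm hnm)
      have hk := hmain z1 h1 z2 h2 a b ha hb hab
      have hlog : Real.log (F (a • z1 + b • z2)) ≤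
          a * Real.log (F z1) + b * Real.log (F z2) := by
        calc Real.log (F (a • z1 + b • z2)) ≤ Real.log (F z1 ^ a * F z2 ^ b) :=
              Real.log_le_log hpm hk
          _ = a * Real.log (F z1) + b * Real.log (F z2) := by
              rw [Real.log_mul (Real.rpow_pos_of_pos hp1 a).ne'
                (Real.rpow_pos_of_pos hp2 b).ne', Real.log_rpow hp1, Real.log_rpow hp2]
      linarith

/-- For an upper semi-continuous log-concave `f` of finite integral, the function
`z ↦ ∫ L_∞ (f(·+z))` is convex on the interior of `supp f`, and its reciprocal is
log-concave there. -/
theorem convexOn_integral_polar_shift (d : ℕ)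
    (f : EuclideanSpace ℝ (Fin d) → ℝ) (hf : ∀ x, 0 ≤ f x)
    (husc : UpperSemicontinuous f)
    (hlc : ∀ x y : EuclideanSpace ℝ (Fin d), ∀ t ∈ Set.Icc (0 : ℝ) 1,
      f x ^ (1 - t) * f y ^ t ≤ f ((1 - t) • x + t • y))
    (hint : Integrable f) :
    ConvexOn ℝ (interior (Function.support f))
      (fun z => ∫ y, polarT (fun x => f (x + z)) y) ∧
    ConcaveOn ℝ (interior (Function.support f))
      (fun z => Real.log (∫ y, polarT (fun x => f (x + z)) y)⁻¹) := by
  have h2 : ∀ z : EuclideanSpace ℝ (Fin d),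
      ∫ y, polarT (fun x => f (x + z)) y = ∫ y, Real.exp ((inner ℝ z y : ℝ)) * polarT f y := by
    intro z
    exact integral_congr_ae (Filter.Eventually.of_forall fun y => polarT_shift f z y)
  simp only [h2]
  exact main_aux f hf hlc
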